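/- Let A, B ≥ 0 be self-adjoint operators on a Hilbert space ℋ. If e^{−A}·e^{−B} is compact, then e^{−(A+B)} is compact, where A + B is the form sum. -/

import Mathlib

open MeasureTheory Set Filter Topology

noncomputable section

/-- The bounded Borel functional calculus of a self-adjoint operator on a complex
Hilbert space `ℋ`, encoded axiomatically: a star-algebra homomorphism from bounded
Borel functions on `ℝ` (only their values on the spectrum matter) into the bounded
operators, with the sup-norm bound and strong σ-continuity. This data is equivalent
to the projection-valued spectral measure of a self-adjoint operator with the given
spectrum. -/
structure SelfAdjointCalculus (ℋ : Type) [NormedAddCommGroup ℋ]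
    [InnerProductSpace ℂ ℋ] [CompleteSpace ℋ] where
  spectrum : Set ℝ
  spectrum_nonempty : spectrum.Nonempty
  spectrum_closed : IsClosed spectrum
  fc : (ℝ → ℂ) → (ℋ →L[ℂ] ℋ)
  fc_one : fc (fun _ => 1) = ContinuousLinearMap.id ℂ ℋ
  fc_add : ∀ f g, fc (f + g) = fc f + fc g
  fc_smul : ∀ (c : ℂ) (f), fc (c • f) = c • fc f
  fc_mul : ∀ f g, fc (f * g) = (fc f).comp (fc g)
  fc_star : ∀ f, fc (fun t => starRingEnd ℂ (f t)) = ContinuousLinearMap.adjoint (fc f)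
  fc_norm : ∀ (f) (C : ℝ), (∀ t ∈ spectrum, ‖f t‖ ≤ C) → ‖fc f‖ ≤ C
  fc_eqOn : ∀ f g, Set.EqOn f g spectrum → fc f = fc g
  fc_tendsto : ∀ (f : ℕ → ℝ → ℂ) (g : ℝ → ℂ) (C : ℝ),
    (∀ n t, ‖f n t‖ ≤ C) →
    (∀ t ∈ spectrum, Filter.Tendsto (fun n => f n t) Filter.atTop (nhds (g t))) →
    ∀ x : ℋ, Filter.Tendsto (fun n => fc (f n) x) Filter.atTop (nhds (fc g x))
  fc_proj_infinite : ∀ l ∈ spectrum, ∀ ε > 0,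
    fc (Set.indicator {t | dist t l < ε} (fun _ => 1)) ≠ 0

namespace SelfAdjointCalculus

variable {ℋ : Type} [NormedAddCommGroup ℋ] [InnerProductSpace ℂ ℋ] [CompleteSpace ℋ]

/-- The spectral projection `𝟙_I(H)`. -/
def proj (Φ : SelfAdjointCalculus ℋ) (I : Set ℝ) : ℋ →L[ℂ] ℋ :=
  Φ.fc (I.indicator (fun _ => 1))

/-- `B` is `H`-relatively compact: `B ∘ 𝟙_I(H)` is compact for every bounded Borel set
`I ⊆ ℝ`. -/
def RelCompactWrt (B : ℋ →L[ℂ] ℋ) (Φ : SelfAdjointCalculus ℋ) : Prop :=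
  ∀ I : Set ℝ, MeasurableSet I → Bornology.IsBounded I →
    IsCompactOperator (B.comp (Φ.proj I))

/-- The semigroup `e^{-tH}` given by the functional calculus. -/
def heat (Φ : SelfAdjointCalculus ℋ) (t : ℝ) : ℋ →L[ℂ] ℋ :=
  Φ.fc (fun x => Complex.exp (-(t * x)))

/-- The resolvent `(H - λ)⁻¹` given by the functional calculus. -/
def resolvent (Φ : SelfAdjointCalculus ℋ) (l : ℂ) : ℋ →L[ℂ] ℋ :=
  Φ.fc (fun t => ((t : ℂ) - l)⁻¹)

/-- The resolvent set of the self-adjoint operator: complex numbers away from the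
(real) spectrum. -/
def resolventSet (Φ : SelfAdjointCalculus ℋ) : Set ℂ :=
  {l : ℂ | ∀ t ∈ Φ.spectrum, (t : ℂ) ≠ l}

/-- Truncated quadratic form `(min(H,n) u | u)`, an approximation of `h[u]`. -/
def formApprox (Φ : SelfAdjointCalculus ℋ) (n : ℕ) (u : ℋ) : ℝ :=
  (inner ℂ (Φ.fc (fun t => ((min t (n : ℝ) : ℝ) : ℂ)) u) u : ℂ).re

/-- `u` belongs to the form domain `Q(H)` of a semibounded operator: the truncated
quadratic forms stay bounded. -/
def InFormDomain (Φ : SelfAdjointCalculus ℋ) (u : ℋ) : Prop :=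
  BddAbove (Set.range fun n => Φ.formApprox n u)

/-- The quadratic form `h[u] = (Hu|u)` (extended to the form domain). -/
def quadForm (Φ : SelfAdjointCalculus ℋ) (u : ℋ) : ℝ :=
  ⨆ n, Φ.formApprox n u

/-- The essential spectrum: points around which every spectral projection has
infinite-dimensional range. -/
def essSpectrum (Φ : SelfAdjointCalculus ℋ) : Set ℝ :=
  {l : ℝ | ∀ ε > 0, ¬ FiniteDimensional ℂ
    (LinearMap.range ((Φ.proj (Set.Ioo (l - ε) (l + ε))) : ℋ →ₗ[ℂ] ℋ))}

end SelfAdjointCalculus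

namespace SelfAdjointCalculus

variable {ℋ : Type} [NormedAddCommGroup ℋ] [InnerProductSpace ℂ ℋ] [CompleteSpace ℋ]

variable (Φ : SelfAdjointCalculus ℋ)

/-- fc of a real-valued function is self-adjoint. -/
lemma fc_real_sa (f : ℝ → ℝ) :
    ContinuousLinearMap.adjoint (Φ.fc (fun t => (f t : ℂ))) = Φ.fc (fun t => (f t : ℂ)) := by
  rw [← Φ.fc_star]
  congr 1
  funext t
  simp [Complex.conj_ofReal]

lemma inner_fc_nonneg (f : ℝ → ℝ) (hf : ∀ t ∈ Φ.spectrum, 0 ≤ f t) (u : ℋ) :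
    0 ≤ (inner ℂ (Φ.fc (fun t => (f t : ℂ)) u) u : ℂ).re := by
  set g : ℝ → ℂ := fun t => (Real.sqrt (f t) : ℂ) with hg
  have heq : Φ.fc (fun t => (f t : ℂ)) = Φ.fc (g * g) := by
    apply Φ.fc_eqOn
    intro t ht
    simp only [g, Pi.mul_apply, ← Complex.ofReal_mul, Real.mul_self_sqrt (hf t ht)]
  have hsa : ContinuousLinearMap.adjoint (Φ.fc g) = Φ.fc g := Φ.fc_real_sa _
  rw [heq, Φ.fc_mul]
  have h2 := ContinuousLinearMap.adjoint_inner_left (Φ.fc g) u (Φ.fc g u)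
  rw [hsa] at h2
  rw [ContinuousLinearMap.comp_apply, h2, inner_self_eq_norm_sq_to_K]
  simp [← Complex.ofReal_pow]

lemma inner_fc_mono (f g : ℝ → ℝ) (h : ∀ t ∈ Φ.spectrum, f t ≤ g t) (u : ℋ) :
    (inner ℂ (Φ.fc (fun t => (f t : ℂ)) u) u : ℂ).re ≤
      (inner ℂ (Φ.fc (fun t => (g t : ℂ)) u) u : ℂ).re := by
  have h0 := Φ.inner_fc_nonneg (fun t => g t - f t) (fun t ht => sub_nonneg.2 (h t ht)) u
  have hadd : Φ.fc (fun t => (g t : ℂ)) =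
      Φ.fc (fun t => (f t : ℂ)) + Φ.fc (fun t => ((g t - f t : ℝ) : ℂ)) := by
    rw [← Φ.fc_add]
    congr 1
    funext t
    simp only [Pi.add_apply]
    push_cast
    ring
  have : (inner ℂ (Φ.fc (fun t => (g t : ℂ)) u) u : ℂ)
      = inner ℂ (Φ.fc (fun t => (f t : ℂ)) u) u
        + inner ℂ (Φ.fc (fun t => ((g t - f t : ℝ) : ℂ)) u) u := by
    rw [hadd, ContinuousLinearMap.add_apply, inner_add_left]
  rw [this, Complex.add_re]
  linarith

/-- A spectral "projection" satisfies ⟪Qv,v⟫.re = ‖Qv‖². -/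
lemma inner_proj_self (I : Set ℝ) (v : ℋ) :
    (inner ℂ (Φ.proj I v) v : ℂ).re = ‖Φ.proj I v‖ ^ 2 := by
  set q : ℝ → ℂ := I.indicator (fun _ => 1) with hq
  have hidem : Φ.fc q = (Φ.fc q).comp (Φ.fc q) := by
    rw [← Φ.fc_mul]
    congr 1
    funext t
    by_cases ht : t ∈ I <;> simp [q, ht]
  have hsa : ContinuousLinearMap.adjoint (Φ.fc q) = Φ.fc q := by
    rw [← Φ.fc_star]
    congr 1
    funext t
    by_cases ht : t ∈ I <;> simp [q, ht]
  have h2 := ContinuousLinearMap.adjoint_inner_left (Φ.fc q) v (Φ.fc q v)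
  rw [hsa] at h2
  have h3 : (inner ℂ (Φ.fc q v) v : ℂ) = inner ℂ (Φ.fc q v) (Φ.fc q v) := by
    conv_lhs => rw [hidem, ContinuousLinearMap.comp_apply]
    exact h2
  show (inner ℂ (Φ.fc q v) v : ℂ).re = ‖Φ.fc q v‖ ^ 2
  rw [h3, inner_self_eq_norm_sq_to_K]
  simp [← Complex.ofReal_pow]

lemma norm_proj_le (I : Set ℝ) (v : ℋ) : ‖Φ.proj I v‖ ≤ ‖v‖ := by
  have h1 : ‖Φ.fc (I.indicator (fun _ => 1))‖ ≤ 1 := by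
    apply Φ.fc_norm
    intro t _
    by_cases ht : t ∈ I <;> simp [ht]
  calc ‖Φ.proj I v‖ ≤ ‖Φ.fc (I.indicator (fun _ => 1))‖ * ‖v‖ :=
        (Φ.fc (I.indicator (fun _ => 1))).le_opNorm v
    _ ≤ 1 * ‖v‖ := mul_le_mul_of_nonneg_right h1 (norm_nonneg v)
    _ = ‖v‖ := one_mul _

/-- Tail estimate: `n ‖𝟙_{(n,∞)}(H) v‖² ≤ h[v]` for `H ≥ 0`. -/
lemma tail_sq_le (hpos : Φ.spectrum ⊆ Set.Ici 0) (n : ℕ) (v : ℋ)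
    (hv : Φ.InFormDomain v) :
    (n : ℝ) * ‖Φ.proj (Set.Ioi (n : ℝ)) v‖ ^ 2 ≤ Φ.quadForm v := by
  set F : ℝ → ℝ := fun t => if (n : ℝ) < t then (n : ℝ) else 0 with hF
  have hfc : Φ.fc (fun t => (F t : ℂ)) = (n : ℂ) • Φ.proj (Set.Ioi (n : ℝ)) := by
    rw [proj, ← Φ.fc_smul]
    congr 1
    funext t
    by_cases ht : (n : ℝ) < t <;>
      simp [F, ht, Set.indicator, Set.mem_Ioi]
  have key : (n : ℝ) * ‖Φ.proj (Set.Ioi (n : ℝ)) v‖ ^ 2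
      = (inner ℂ (Φ.fc (fun t => (F t : ℂ)) v) v : ℂ).re := by
    rw [hfc, ContinuousLinearMap.smul_apply, inner_smul_left]
    rw [Complex.mul_re]
    simp [Complex.conj_ofReal, Φ.inner_proj_self]
  rw [key]
  have h1 : (inner ℂ (Φ.fc (fun t => (F t : ℂ)) v) v : ℂ).re ≤ Φ.formApprox n v := by
    apply Φ.inner_fc_mono
    intro t ht
    have ht0 : (0 : ℝ) ≤ t := hpos ht
    by_cases h : (n : ℝ) < t
    · simp only [F, if_pos h]
      exact le_min h.le (le_refl _)
    · simp only [F, if_neg h]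
      exact le_min ht0 (Nat.cast_nonneg n)
  exact h1.trans (le_ciSup hv n)

lemma quadForm_nonneg (hpos : Φ.spectrum ⊆ Set.Ici 0) (v : ℋ)
    (hv : Φ.InFormDomain v) : 0 ≤ Φ.quadForm v := by
  have h0 : 0 ≤ Φ.formApprox 0 v := by
    apply Φ.inner_fc_nonneg (fun t => min t ((0 : ℕ) : ℝ))
    intro t ht
    have := hpos ht
    simp only [Nat.cast_zero]
    exact le_min this (le_refl 0)
  exact h0.trans (le_ciSup hv 0)

lemma heat_sa (Φ : SelfAdjointCalculus ℋ) :
    ContinuousLinearMap.adjoint (Φ.heat 1) = Φ.heat 1 := by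
  rw [heat, ← Φ.fc_star]
  congr 1
  funext t
  rw [← Complex.exp_conj]
  congr 1
  simp [Complex.conj_ofReal]

lemma scalar_le_one (m : ℕ) (t : ℝ) : min t (m : ℝ) * Real.exp (-(2 * t)) ≤ 1 := by
  have h2 : (0 : ℝ) < Real.exp (-(2 * t)) := Real.exp_pos _
  have h3 : min t (m : ℝ) * Real.exp (-(2 * t)) ≤ t * Real.exp (-(2 * t)) :=
    mul_le_mul_of_nonneg_right (min_le_left _ _) h2.le
  refine h3.trans ?_
  rcases le_or_gt t 0 with ht | ht
  · nlinarith
  · have h4 : t ≤ Real.exp (2 * t) := by nlinarith [Real.add_one_le_exp (2 * t)]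
    rw [Real.exp_neg, ← div_eq_mul_inv, div_le_one (Real.exp_pos _)]
    exact h4

lemma exp_mul_self (z : ℂ) :
    Complex.exp (-(1 * z)) * Complex.exp (-(1 * z)) = Complex.exp (-(2 * z)) := by
  rw [← Complex.exp_add]
  congr 1
  ring

lemma formApprox_heat_le (Φ : SelfAdjointCalculus ℋ) (m : ℕ) (u : ℋ) :
    Φ.formApprox m (Φ.heat 1 u) ≤ ‖u‖ ^ 2 := by
  set e : ℝ → ℂ := fun x => Complex.exp (-(1 * x)) with he
  set Mf : ℝ → ℂ := fun t => ((min t (m : ℝ) : ℝ) : ℂ) with hMf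
  have hsa : ContinuousLinearMap.adjoint (Φ.fc e) = Φ.fc e := Φ.heat_sa
  have h2 := ContinuousLinearMap.adjoint_inner_left (Φ.fc e) u (Φ.fc (Mf * e) u)
  rw [hsa] at h2
  have hstep : Φ.formApprox m (Φ.heat 1 u)
      = (inner ℂ (Φ.fc (e * (Mf * e)) u) u : ℂ).re := by
    show (inner ℂ (Φ.fc Mf (Φ.fc e u)) (Φ.fc e u) : ℂ).re = _
    have hcomp1 : Φ.fc Mf (Φ.fc e u) = Φ.fc (Mf * e) u := by rw [Φ.fc_mul]; rfl
    have hcomp2 : Φ.fc e (Φ.fc (Mf * e) u) = Φ.fc (e * (Mf * e)) u := by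
      rw [Φ.fc_mul e (Mf * e)]; rfl
    rw [hcomp1, ← h2, hcomp2]
  rw [hstep]
  have hfun : Φ.fc (e * (Mf * e))
      = Φ.fc (fun t => ((min t (m : ℝ) * Real.exp (-(2 * t)) : ℝ) : ℂ)) := by
    congr 1
    funext t
    simp only [Pi.mul_apply, e, Mf]
    rw [Complex.ofReal_mul, Complex.ofReal_exp]
    push_cast
    rw [show Complex.exp (-(1 * (t : ℂ))) * (((min (t:ℝ) (m:ℝ) : ℝ) : ℂ) * Complex.exp (-(1 * (t:ℂ))))
        = ((min (t:ℝ) (m:ℝ) : ℝ) : ℂ) * (Complex.exp (-(1 * (t : ℂ))) * Complex.exp (-(1 * (t:ℂ)))) from by ring,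
      exp_mul_self]
  rw [hfun]
  have hmono := Φ.inner_fc_mono (fun t => min t (m : ℝ) * Real.exp (-(2 * t)))
    (fun _ => 1) (fun t _ => scalar_le_one m t) u
  refine hmono.trans ?_
  have h1 : Φ.fc (fun _ : ℝ => (((1 : ℝ) : ℂ))) = ContinuousLinearMap.id ℂ ℋ := by
    rw [show (fun _ : ℝ => (((1 : ℝ) : ℂ))) = (fun _ : ℝ => (1 : ℂ)) from by
      funext _; norm_num, Φ.fc_one]
  rw [h1]
  simp [inner_self_eq_norm_sq_to_K, ← Complex.ofReal_pow]

lemma proj_eq_comp_heat (Φ : SelfAdjointCalculus ℋ) (n : ℝ) :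
    Φ.proj (Set.Icc 0 n) =
      (Φ.fc (fun t => (Set.Icc 0 n).indicator (fun _ => (1 : ℂ)) t * Complex.exp t)).comp
        (Φ.heat 1) := by
  rw [heat, ← Φ.fc_mul, proj]
  congr 1
  funext t
  simp only [Pi.mul_apply]
  rw [mul_assoc, ← Complex.exp_add]
  ring_nf
  simp

lemma heat_comp_eq_proj (Φ : SelfAdjointCalculus ℋ) (n : ℝ) :
    Φ.proj (Set.Icc 0 n) =
      (Φ.heat 1).comp
        (Φ.fc (fun t => Complex.exp t * (Set.Icc 0 n).indicator (fun _ => (1 : ℂ)) t)) := by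
  rw [heat, ← Φ.fc_mul, proj]
  congr 1
  funext t
  simp only [Pi.mul_apply]
  rw [← mul_assoc, ← Complex.exp_add]
  ring_nf
  simp

lemma proj_compl (Φ : SelfAdjointCalculus ℋ) (hpos : Φ.spectrum ⊆ Set.Ici 0)
    (n : ℝ) (hn : 0 ≤ n) (v : ℋ) :
    v - Φ.proj (Set.Icc 0 n) v = Φ.proj (Set.Ioi n) v := by
  have h : Φ.proj (Set.Ioi n) = ContinuousLinearMap.id ℂ ℋ - Φ.proj (Set.Icc 0 n) := by
    rw [eq_sub_iff_add_eq, proj, proj, ← Φ.fc_add, ← Φ.fc_one]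
    apply Φ.fc_eqOn
    intro t ht
    have ht0 : (0 : ℝ) ≤ t := hpos ht
    by_cases h : t ≤ n <;>
      simp [Set.indicator, Set.mem_Ioi, Set.mem_Icc, ht0, h, not_lt.2, lt_of_not_ge]
  rw [h]
  simp
end SelfAdjointCalculus

/-- Let `A, B ≥ 0` be self-adjoint (calculi `ΦA`, `ΦB`) with `Q(A) ∩ Q(B)`
dense, and let `A + B` be the form sum (calculus `ΦS`, whose form domain is
`Q(A) ∩ Q(B)` and whose form is the sum of the forms). If `e^{-A} e^{-B}` is compact,
then `e^{-(A+B)}` is compact. -/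
theorem stmt13 {ℋ : Type} [NormedAddCommGroup ℋ] [InnerProductSpace ℂ ℋ] [CompleteSpace ℋ]
    (ΦA ΦB ΦS : SelfAdjointCalculus ℋ)
    (hA : ΦA.spectrum ⊆ Set.Ici 0) (hB : ΦB.spectrum ⊆ Set.Ici 0)
    (hdense : Dense {u : ℋ | ΦA.InFormDomain u ∧ ΦB.InFormDomain u})
    -- ΦS is the form sum A + B:
    (hdom : ∀ u, ΦS.InFormDomain u ↔ (ΦA.InFormDomain u ∧ ΦB.InFormDomain u))
    (hform : ∀ u, ΦA.InFormDomain u → ΦB.InFormDomain u →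
      ΦS.quadForm u = ΦA.quadForm u + ΦB.quadForm u)
    (hcpt : IsCompactOperator ((ΦA.heat 1).comp (ΦB.heat 1))) :
    IsCompactOperator (ΦS.heat 1) := by
  classical
  open SelfAdjointCalculus in
  -- The compact approximants
  set K : ℕ → (ℋ →L[ℂ] ℋ) := fun n =>
    ((ΦA.proj (Set.Icc 0 (n : ℝ))).comp (ΦB.proj (Set.Icc 0 (n : ℝ)))).comp (ΦS.heat 1)
    with hK
  -- each K n is compact
  have hKcpt : ∀ n : ℕ, IsCompactOperator (K n) := by
    intro n
    have hPP : IsCompactOperator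
        ((ΦA.proj (Set.Icc 0 (n : ℝ))).comp (ΦB.proj (Set.Icc 0 (n : ℝ)))) := by
      rw [ΦA.proj_eq_comp_heat (n : ℝ), ΦB.heat_comp_eq_proj (n : ℝ)]
      have h := (hcpt.comp_clm
          (ΦB.fc (fun t => Complex.exp t * (Set.Icc 0 (n:ℝ)).indicator (fun _ => (1:ℂ)) t))).clm_comp
          (ΦA.fc (fun t => (Set.Icc 0 (n:ℝ)).indicator (fun _ => (1:ℂ)) t * Complex.exp t))
      have heq : ⇑(((ΦA.fc (fun t => (Set.Icc 0 (n:ℝ)).indicator (fun _ => (1:ℂ)) t * Complex.exp t)).comp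
            (ΦA.heat 1)).comp
            ((ΦB.heat 1).comp
              (ΦB.fc (fun t => Complex.exp t * (Set.Icc 0 (n:ℝ)).indicator (fun _ => (1:ℂ)) t))))
          = ⇑(ΦA.fc (fun t => (Set.Icc 0 (n:ℝ)).indicator (fun _ => (1:ℂ)) t * Complex.exp t)) ∘
            (⇑((ΦA.heat 1).comp (ΦB.heat 1)) ∘
              ⇑(ΦB.fc (fun t => Complex.exp t * (Set.Icc 0 (n:ℝ)).indicator (fun _ => (1:ℂ)) t))) := by
        funext x
        simp [ContinuousLinearMap.comp_apply]
      rw [heq]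
      exact h
    have h2 := hPP.comp_clm (ΦS.heat 1)
    have heq2 : ⇑(K n) = ⇑((ΦA.proj (Set.Icc 0 (n : ℝ))).comp (ΦB.proj (Set.Icc 0 (n : ℝ)))) ∘
        ⇑(ΦS.heat 1) := by
      funext x
      simp [hK, ContinuousLinearMap.comp_apply]
    rw [heq2]
    exact h2
  -- the norm estimate
  have hest : ∀ n : ℕ, 1 ≤ n → ∀ u : ℋ,
      ‖(ΦS.heat 1 - K n) u‖ ≤ 2 / Real.sqrt n * ‖u‖ := by
    intro n hn u
    have hn0 : (0 : ℝ) < n := by exact_mod_cast hn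
    set v : ℋ := ΦS.heat 1 u with hv
    have hvS : ΦS.InFormDomain v := by
      refine ⟨‖u‖ ^ 2, ?_⟩
      rintro x ⟨m, rfl⟩
      exact ΦS.formApprox_heat_le m u
    obtain ⟨hvA, hvB⟩ := (hdom v).1 hvS
    have hsle : ΦS.quadForm v ≤ ‖u‖ ^ 2 :=
      ciSup_le fun m => ΦS.formApprox_heat_le m u
    have hsum := hform v hvA hvB
    have hbq0 := ΦB.quadForm_nonneg hB v hvB
    have haq0 := ΦA.quadForm_nonneg hA v hvA
    have haq : ΦA.quadForm v ≤ ‖u‖ ^ 2 := by linarith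
    have hbq : ΦB.quadForm v ≤ ‖u‖ ^ 2 := by linarith
    -- tail bounds
    have htail : ∀ (Φ : SelfAdjointCalculus ℋ), Φ.spectrum ⊆ Set.Ici 0 →
        Φ.InFormDomain v → Φ.quadForm v ≤ ‖u‖ ^ 2 →
        ‖Φ.proj (Set.Ioi (n : ℝ)) v‖ ≤ ‖u‖ / Real.sqrt n := by
      intro Φ hpos hdomv hqle
      have h1 := Φ.tail_sq_le hpos n v hdomv
      have h2 : ‖Φ.proj (Set.Ioi (n : ℝ)) v‖ ^ 2 ≤ ‖u‖ ^ 2 / n := by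
        rw [le_div_iff₀ hn0]
        nlinarith
      calc ‖Φ.proj (Set.Ioi (n : ℝ)) v‖
          = Real.sqrt (‖Φ.proj (Set.Ioi (n : ℝ)) v‖ ^ 2) :=
            (Real.sqrt_sq (norm_nonneg _)).symm
        _ ≤ Real.sqrt (‖u‖ ^ 2 / n) := Real.sqrt_le_sqrt h2
        _ = ‖u‖ / Real.sqrt n := by
            rw [Real.sqrt_div (sq_nonneg _), Real.sqrt_sq (norm_nonneg _)]
    have htailA := htail ΦA hA hvA haq
    have htailB := htail ΦB hB hvB hbq
    -- decompose
    have hdecomp : (ΦS.heat 1 - K n) u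
        = (v - ΦA.proj (Set.Icc 0 (n : ℝ)) v)
          + ΦA.proj (Set.Icc 0 (n : ℝ)) (v - ΦB.proj (Set.Icc 0 (n : ℝ)) v) := by
      simp only [hK, ContinuousLinearMap.sub_apply, ContinuousLinearMap.comp_apply, map_sub, ← hv]
      abel
    rw [hdecomp]
    have hcA : v - ΦA.proj (Set.Icc 0 (n : ℝ)) v = ΦA.proj (Set.Ioi (n : ℝ)) v :=
      ΦA.proj_compl hA (n : ℝ) (Nat.cast_nonneg n) v
    have hcB : v - ΦB.proj (Set.Icc 0 (n : ℝ)) v = ΦB.proj (Set.Ioi (n : ℝ)) v :=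
      ΦB.proj_compl hB (n : ℝ) (Nat.cast_nonneg n) v
    calc ‖(v - ΦA.proj (Set.Icc 0 (n : ℝ)) v)
          + ΦA.proj (Set.Icc 0 (n : ℝ)) (v - ΦB.proj (Set.Icc 0 (n : ℝ)) v)‖
        ≤ ‖v - ΦA.proj (Set.Icc 0 (n : ℝ)) v‖
          + ‖ΦA.proj (Set.Icc 0 (n : ℝ)) (v - ΦB.proj (Set.Icc 0 (n : ℝ)) v)‖ :=
          norm_add_le _ _
      _ ≤ ‖ΦA.proj (Set.Ioi (n : ℝ)) v‖ + ‖v - ΦB.proj (Set.Icc 0 (n : ℝ)) v‖ := by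
          rw [hcA]
          exact add_le_add (le_refl _) (ΦA.norm_proj_le _ _)
      _ = ‖ΦA.proj (Set.Ioi (n : ℝ)) v‖ + ‖ΦB.proj (Set.Ioi (n : ℝ)) v‖ := by rw [hcB]
      _ ≤ ‖u‖ / Real.sqrt n + ‖u‖ / Real.sqrt n := add_le_add htailA htailB
      _ = 2 / Real.sqrt n * ‖u‖ := by ring
  -- conclude via closedness of compact operators
  have hnorm : ∀ n : ℕ, 1 ≤ n → ‖K n - ΦS.heat 1‖ ≤ 2 / Real.sqrt n := by
    intro n hn
    rw [← neg_sub, norm_neg]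
    refine ContinuousLinearMap.opNorm_le_bound _ (by positivity) ?_
    exact hest n hn
  have hlim : Tendsto (fun n : ℕ => (2 : ℝ) / Real.sqrt n) atTop (𝓝 0) := by
    have h1 : Tendsto (fun n : ℕ => Real.sqrt n) atTop atTop := by
      apply tendsto_atTop_atTop_of_monotone
      · intro a b hab
        exact Real.sqrt_le_sqrt (by exact_mod_cast hab)
      · intro b
        obtain ⟨n, hn⟩ := exists_nat_ge (b ^ 2)
        refine ⟨n, ?_⟩
        rcases le_or_gt b 0 with hb | hb
        · exact hb.trans (Real.sqrt_nonneg _)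
        · calc b = Real.sqrt (b ^ 2) := (Real.sqrt_sq hb.le).symm
            _ ≤ Real.sqrt n := Real.sqrt_le_sqrt hn
    have h2 : Tendsto (fun n : ℕ => (Real.sqrt n)⁻¹) atTop (𝓝 0) :=
      h1.inv_tendsto_atTop
    have h3 := h2.const_mul (2 : ℝ)
    simpa [div_eq_mul_inv] using h3
  have htendsto : Tendsto K atTop (𝓝 (ΦS.heat 1)) := by
    rw [tendsto_iff_norm_sub_tendsto_zero]
    apply squeeze_zero' (Eventually.of_forall fun n => norm_nonneg _)
      ((eventually_ge_atTop 1).mono fun n hn => hnorm n hn) hlim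
  exact isCompactOperator_of_tendsto htendsto (Eventually.of_forall hKcpt)
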